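/- arXiv:1602.02987 — 5 statements merged into one kernel-verified Lean document; each statement's English description precedes it below -/
import Mathlib

section
/- For distinct nodes u, v of Γ with u not linked to v, the linear inequality x_u + x_v − 2·Σ_{i ∈ V∖{u,v}} x_i ≤ 1 is valid on P(Γ), and the set of points of P(Γ) satisfying it with equality is exactly the segment [χ({u}), χ({v})]; hence χ({u}) and χ({v}) are adjacent vertices of P(Γ). -/
open Set

noncomputable section

variable {V : Type*}

/-- Characteristic vector of a set of nodes. -/
def chi (S : Set V) : V → ℝ := S.indicator (fun _ => (1 : ℝ))

/-- The candidate vertex set of the polytope `P(Γ)`. -/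
def polyVerts (G : SimpleGraph V) : Set (V → ℝ) :=
  {x | x = chi (∅ : Set V) ∨ (∃ v : V, x = chi {v}) ∨
        (∃ u w : V, G.Adj u w ∧ x = chi {u, w})}

/-- The polytope `P(Γ)`. -/
def poly (G : SimpleGraph V) : Set (V → ℝ) := convexHull ℝ (polyVerts G)

/-- Two points are adjacent vertices of a convex set `P` when the segment
joining them is a (1-dimensional) face, i.e. an extreme subset of `P`. -/
def AdjVert (P : Set (V → ℝ)) (p q : V → ℝ) : Prop :=
  p ≠ q ∧ IsExtreme ℝ P (segment ℝ p q)

/-- A combinatorial automorphism of `P`: a bijection of the vertex (extreme point)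
set of `P` mapping the vertex set of each face onto the vertex set of some face. -/
def IsCombAut (P : Set (V → ℝ)) (σ : (V → ℝ) → (V → ℝ)) : Prop :=
  Set.BijOn σ (P.extremePoints ℝ) (P.extremePoints ℝ) ∧
  ∀ F : Set (V → ℝ), IsExtreme ℝ P F →
    ∃ F' : Set (V → ℝ), IsExtreme ℝ P F' ∧
      σ '' (F ∩ P.extremePoints ℝ) = F' ∩ P.extremePoints ℝ

/-- An automorphism of the skeleton of `P`: a bijection of the vertex set of `P`
preserving adjacency (in both directions). -/
def IsSkelAut (P : Set (V → ℝ)) (σ : (V → ℝ) → (V → ℝ)) : Prop :=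
  Set.BijOn σ (P.extremePoints ℝ) (P.extremePoints ℝ) ∧
  ∀ p ∈ P.extremePoints ℝ, ∀ q ∈ P.extremePoints ℝ,
    (AdjVert P p q ↔ AdjVert P (σ p) (σ q))

section Helpers

variable [Fintype V] [DecidableEq V]

lemma chi_single_apply (w i : V) : chi ({w} : Set V) i = if i = w then 1 else 0 := by
  simp [chi, Set.indicator]

lemma sum_chi_single (t : Finset V) (w : V) :
    ∑ i ∈ t, chi ({w} : Set V) i = if w ∈ t then 1 else 0 := by
  simp [chi_single_apply]

lemma chi_pair (a b : V) :
    chi ({a, b} : Set V) = fun i => max (chi ({a} : Set V) i) (chi ({b} : Set V) i) := by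
  funext i
  classical
  simp only [chi, Set.indicator]
  by_cases ha : i = a <;> by_cases hb : i = b <;>
    simp_all [Set.mem_insert_iff, Set.mem_singleton_iff]

lemma chi_pair' (a b : V) (hab : a ≠ b) :
    chi ({a, b} : Set V) = chi ({a} : Set V) + chi ({b} : Set V) := by
  funext i
  classical
  simp only [chi, Set.indicator, Pi.add_apply]
  by_cases ha : i = a <;> by_cases hb : i = b <;>
    simp_all [Set.mem_insert_iff, Set.mem_singleton_iff]

/-- The linear functional defining the face. -/
def lfun (u v : V) : (V → ℝ) →ₗ[ℝ] ℝ where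
  toFun x := x u + x v - 2 * ∑ i ∈ Finset.univ \ {u, v}, x i
  map_add' x y := by simp [Finset.sum_add_distrib]; ring
  map_smul' c x := by
    simp only [Pi.smul_apply, smul_eq_mul, RingHom.id_apply, ← Finset.mul_sum]
    ring

lemma lfun_apply (u v : V) (x : V → ℝ) :
    lfun u v x = x u + x v - 2 * ∑ i ∈ Finset.univ \ {u, v}, x i := rfl

lemma lfun_chi_empty (u v : V) : lfun u v (chi (∅ : Set V)) = 0 := by
  simp [lfun_apply, chi]

lemma lfun_chi_single (u v w : V) (huv : u ≠ v) :
    lfun u v (chi ({w} : Set V)) = if w = u ∨ w = v then 1 else -2 := by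
  simp only [lfun_apply, sum_chi_single, chi_single_apply, Finset.mem_sdiff,
    Finset.mem_univ, true_and, Finset.mem_insert, Finset.mem_singleton]
  by_cases hu : w = u
  · subst hu
    simp [Ne.symm huv, huv]
  · by_cases hv : w = v
    · subst hv
      simp [huv, Ne.symm huv]
    · simp only [hu, hv, Ne.symm hu, Ne.symm hv, if_false, if_neg, or_self,
        not_false_eq_true, if_true]
      norm_num
      exact ⟨hu, hv⟩

lemma lfun_le_on_verts {G : SimpleGraph V} {u v : V} (huv : u ≠ v) (h : ¬ G.Adj u v)
    {p : V → ℝ} (hp : p ∈ polyVerts G) : lfun u v p ≤ 1 := by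
  rcases hp with rfl | ⟨w, rfl⟩ | ⟨a, b, hab, rfl⟩
  · rw [lfun_chi_empty]; norm_num
  · rw [lfun_chi_single _ _ _ huv]; split <;> norm_num
  · rw [chi_pair' a b hab.ne, map_add, lfun_chi_single _ _ _ huv, lfun_chi_single _ _ _ huv]
    have : ¬ ((a = u ∨ a = v) ∧ (b = u ∨ b = v)) := by
      rintro ⟨(rfl | rfl), (rfl | rfl)⟩
      · exact hab.ne rfl
      · exact h hab
      · exact h hab.symm
      · exact hab.ne rfl
    split <;> split <;> norm_num <;> tauto

lemma lfun_eq_on_verts {G : SimpleGraph V} {u v : V} (huv : u ≠ v) (h : ¬ G.Adj u v)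
    {p : V → ℝ} (hp : p ∈ polyVerts G) (hp1 : lfun u v p = 1) :
    p = chi ({u} : Set V) ∨ p = chi ({v} : Set V) := by
  rcases hp with rfl | ⟨w, rfl⟩ | ⟨a, b, hab, rfl⟩
  · rw [lfun_chi_empty] at hp1; norm_num at hp1
  · rw [lfun_chi_single _ _ _ huv] at hp1
    rcases ite_eq_iff.mp hp1 with ⟨(rfl | rfl), -⟩ | ⟨-, habs⟩
    · exact Or.inl rfl
    · exact Or.inr rfl
    · norm_num at habs
  · exfalso
    rw [chi_pair' a b hab.ne, map_add, lfun_chi_single _ _ _ huv, lfun_chi_single _ _ _ huv] at hp1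
    have : ¬ ((a = u ∨ a = v) ∧ (b = u ∨ b = v)) := by
      rintro ⟨(rfl | rfl), (rfl | rfl)⟩
      · exact hab.ne rfl
      · exact h hab
      · exact h hab.symm
      · exact hab.ne rfl
    revert hp1; split <;> split <;> norm_num <;> tauto

lemma chi_single_mem_poly (G : SimpleGraph V) (w : V) :
    chi ({w} : Set V) ∈ poly G :=
  subset_convexHull ℝ _ (Or.inr (Or.inl ⟨w, rfl⟩))

end Helpers

theorem stmt2 [Fintype V] [DecidableEq V] (G : SimpleGraph V) {u v : V}
    (huv : u ≠ v) (h : ¬ G.Adj u v) :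
    (∀ x ∈ poly G, x u + x v - 2 * ∑ i ∈ Finset.univ \ {u, v}, x i ≤ 1) ∧
    {x ∈ poly G | x u + x v - 2 * ∑ i ∈ Finset.univ \ {u, v}, x i = 1} =
      segment ℝ (chi ({u} : Set V)) (chi ({v} : Set V)) ∧
    AdjVert (poly G) (chi ({u} : Set V)) (chi ({v} : Set V)) := by
  -- Part 1: validity of the inequality
  have hle : ∀ x ∈ poly G, lfun u v x ≤ 1 := by
    intro x hx
    have hsub : poly G ⊆ {x | lfun u v x ≤ 1} :=
      convexHull_min (fun p hp => lfun_le_on_verts huv h hp)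
        (convex_halfSpace_le (lfun u v).isLinear 1)
    exact hsub hx
  have hchienduv : lfun u v (chi ({u} : Set V)) = 1 := by
    rw [lfun_chi_single _ _ _ huv]; simp
  have hchiendv : lfun u v (chi ({v} : Set V)) = 1 := by
    rw [lfun_chi_single _ _ _ huv]; simp
  -- Part 2: the equality set is the segment
  have hseg : {x ∈ poly G | lfun u v x = 1} =
      segment ℝ (chi ({u} : Set V)) (chi ({v} : Set V)) := by
    apply Set.Subset.antisymm
    · rintro x ⟨hx, hx1⟩
      rw [poly, convexHull_eq] at hx
      obtain ⟨ι, t, w, z, hw0, hw1, hz, hx⟩ := hx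
      have hxsum : x = ∑ i ∈ t, w i • z i := by
        rw [← hx, Finset.centerMass_eq_of_sum_1 _ _ hw1]
      have hval : ∑ i ∈ t, w i * (1 - lfun u v (z i)) = 0 := by
        have : lfun u v x = ∑ i ∈ t, w i * lfun u v (z i) := by
          rw [hxsum, map_sum]
          simp [map_smul]
        simp only [mul_sub, Finset.sum_sub_distrib, ← Finset.sum_mul] at *
        rw [this] at hx1
        simp [mul_one]
        linarith [hx1]
      have hterm : ∀ i ∈ t, w i * (1 - lfun u v (z i)) = 0 :=
        (Finset.sum_eq_zero_iff_of_nonneg (fun i hi =>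
          mul_nonneg (hw0 i hi)
            (by linarith [lfun_le_on_verts huv h (hz i hi)]))).mp hval
      have hz' : ∀ i ∈ t, w i ≠ 0 →
          z i ∈ ({chi ({u} : Set V), chi ({v} : Set V)} : Set (V → ℝ)) := by
        intro i hi hwi
        have := hterm i hi
        have h1 : lfun u v (z i) = 1 := by
          rcases mul_eq_zero.mp this with h' | h'
          · exact absurd h' hwi
          · linarith
        rcases lfun_eq_on_verts huv h (hz i hi) h1 with h' | h' <;> simp [h']
      rw [← convexHull_pair]
      rw [← hx, ← Finset.centerMass_filter_ne_zero z]
      by_cases ht : (t.filter fun i => w i ≠ 0).Nonempty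
      · apply Finset.centerMass_mem_convexHull
        · intro i hi; exact hw0 i (Finset.mem_of_mem_filter i hi)
        · obtain ⟨i, hi⟩ := ht
          have := Finset.mem_filter.mp hi
          refine Finset.sum_pos' (fun j hj => hw0 j (Finset.mem_of_mem_filter j hj)) ⟨i, hi, ?_⟩
          exact lt_of_le_of_ne (hw0 i this.1) (Ne.symm this.2)
        · intro i hi
          have := Finset.mem_filter.mp hi
          exact hz' i this.1 this.2
      · exfalso
        rw [Finset.not_nonempty_iff_eq_empty] at ht
        have : ∑ i ∈ t, w i = 0 := by
          apply Finset.sum_eq_zero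
          intro i hi
          by_contra hne
          exact (Finset.eq_empty_iff_forall_notMem.mp ht i)
            (Finset.mem_filter.mpr ⟨hi, hne⟩)
        rw [hw1] at this; norm_num at this
    · intro x hx
      obtain ⟨a, b, ha, hb, hab, rfl⟩ := hx
      constructor
      · exact (convex_convexHull ℝ _).segment_subset
          (chi_single_mem_poly G u) (chi_single_mem_poly G v)
          ⟨a, b, ha, hb, hab, rfl⟩
      · rw [map_add, map_smul, map_smul, hchienduv, hchiendv]
        simpa using hab
  have hne : chi ({u} : Set V) ≠ chi ({v} : Set V) := by
    intro heq
    have := congrFun heq u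
    rw [chi_single_apply, chi_single_apply] at this
    simp [huv] at this
  refine ⟨fun x hx => hle x hx, hseg, hne, ?_⟩
  -- Part 3: the segment is an exposed (hence extreme) face
  have hexp : IsExposed ℝ (poly G)
      (segment ℝ (chi ({u} : Set V)) (chi ({v} : Set V))) := by
    intro _
    refine ⟨(lfun u v).toContinuousLinearMap, ?_⟩
    rw [← hseg]
    ext x
    constructor
    · rintro ⟨hx, hx1⟩
      refine ⟨hx, fun y hy => ?_⟩
      simp only [LinearMap.coe_toContinuousLinearMap']
      rw [hx1]
      exact hle y hy
    · rintro ⟨hx, hmax⟩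
      refine ⟨hx, le_antisymm (hle x hx) ?_⟩
      have := hmax _ (chi_single_mem_poly G u)
      simp only [LinearMap.coe_toContinuousLinearMap'] at this
      rw [hchienduv] at this
      exact this
  exact hexp.isExtreme
end
end

section
/- If e and f are disjoint links of Γ which are contained in a common four-cycle (i.e. there exist links e', f' such that e, e', f, f' form a 4-cycle), then the midpoint of χ(e) and χ(f) equals the midpoint of χ(e') and χ(f'), hence χ(e) and χ(f) are not adjacent vertices of P(Γ). -/
open Set

noncomputable section

variable {V : Type*}

lemma chi_apply (S : Set V) (x : V) [Decidable (x ∈ S)] :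
    chi S x = if x ∈ S then 1 else 0 := by
  simp [chi, Set.indicator]

theorem stmt6 [Fintype V] (G : SimpleGraph V) {a b c d : V}
    (he : G.Adj a b) (hf : G.Adj c d)
    (hac : a ≠ c) (had : a ≠ d) (hbc : b ≠ c) (hbd : b ≠ d)
    (he' : G.Adj b c) (hf' : G.Adj d a) :
    midpoint ℝ (chi ({a, b} : Set V)) (chi ({c, d} : Set V)) =
      midpoint ℝ (chi ({b, c} : Set V)) (chi ({d, a} : Set V)) ∧
    ¬ AdjVert (poly G) (chi ({a, b} : Set V)) (chi ({c, d} : Set V)) := by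
  classical
  have hab := he.ne
  have hcd := hf.ne
  have hmid : midpoint ℝ (chi ({a, b} : Set V)) (chi ({c, d} : Set V)) =
      midpoint ℝ (chi ({b, c} : Set V)) (chi ({d, a} : Set V)) := by
    funext x
    simp only [midpoint, AffineMap.coe_lineMap, Pi.add_apply, Pi.smul_apply, smul_eq_mul,
      vsub_eq_sub, vadd_eq_add, Pi.sub_apply]
    rw [chi_apply, chi_apply, chi_apply, chi_apply]
    by_cases hxa : x = a <;> by_cases hxb : x = b <;> by_cases hxc : x = c <;>
      by_cases hxd : x = d <;>
      subst_vars <;>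
      simp_all [Set.mem_insert_iff, Set.mem_singleton_iff, eq_comm] <;> ring
  refine ⟨hmid, ?_⟩
  rintro ⟨hne, hext⟩
  set p := chi ({a, b} : Set V)
  set q := chi ({c, d} : Set V)
  set p' := chi ({b, c} : Set V)
  set q' := chi ({d, a} : Set V)
  have hp' : p' ∈ poly G :=
    subset_convexHull ℝ _ (Or.inr (Or.inr ⟨b, c, he', rfl⟩))
  have hq' : q' ∈ poly G :=
    subset_convexHull ℝ _ (Or.inr (Or.inr ⟨d, a, hf', rfl⟩))
  have hmem : midpoint ℝ p q ∈ segment ℝ p q := by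
    refine ⟨1/2, 1/2, by norm_num, by norm_num, by norm_num, ?_⟩
    rw [midpoint_eq_smul_add, invOf_eq_inv]
    module
  have hopen : midpoint ℝ p q ∈ openSegment ℝ p' q' := by
    rw [hmid]
    refine ⟨1/2, 1/2, by norm_num, by norm_num, by norm_num, ?_⟩
    rw [midpoint_eq_smul_add, invOf_eq_inv]
    module
  have hp'seg := hext.2 hp' hq' hmem hopen
  obtain ⟨t, s, ht, hs, hts, heq⟩ := hp'seg
  have ha := congrFun heq a
  have hb := congrFun heq b
  simp only [Pi.add_apply, Pi.smul_apply, smul_eq_mul, p, q, p'] at ha hb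
  rw [chi_apply, chi_apply, chi_apply] at ha
  rw [chi_apply, chi_apply, chi_apply] at hb
  simp only [Set.mem_insert_iff, Set.mem_singleton_iff] at ha hb
  simp only [true_or, or_true, if_true] at ha hb
  rw [if_neg (by tauto), if_neg (by tauto)] at ha
  rw [if_neg (by tauto)] at hb
  nlinarith
end
end

section
/- The skeleton graph of P(Γ) has diameter at most 2: any two distinct vertices of P(Γ) are either adjacent, or have a common neighbor in the skeleton. -/
open Set

noncomputable section

variable {V : Type*}

open scoped Classical

/-! ### chi basics -/

lemma chi_mem {S : Set V} {i : V} (h : i ∈ S) : chi S i = 1 := Set.indicator_of_mem h _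

lemma chi_not_mem {S : Set V} {i : V} (h : i ∉ S) : chi S i = 0 := Set.indicator_of_notMem h _

lemma chi_injective : Function.Injective (chi (V := V)) := by
  intro S T h
  ext x
  constructor <;> intro hx <;> by_contra hn
  · have := congrFun h x; rw [chi_mem hx, chi_not_mem hn] at this; norm_num at this
  · have := congrFun h x; rw [chi_not_mem hn, chi_mem hx] at this; norm_num at this

lemma chi_ne_chi {S T : Set V} (h : S ≠ T) : chi S ≠ chi T := fun hc => h (chi_injective hc)

lemma chi_comm (u w : V) : chi ({u, w} : Set V) = chi {w, u} := by rw [Set.pair_comm]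

lemma chi_empty_ne_single (v : V) : chi (∅ : Set V) ≠ chi {v} :=
  chi_ne_chi (Set.singleton_ne_empty v).symm

lemma chi_single_ne_single {u v : V} (h : u ≠ v) : chi ({u} : Set V) ≠ chi {v} :=
  chi_ne_chi (by simp [h])

lemma chi_single_ne_pair {u w : V} (h : u ≠ w) : chi ({u} : Set V) ≠ chi {u, w} := by
  apply chi_ne_chi
  intro hc
  have : w ∈ ({u} : Set V) := hc ▸ (by simp : w ∈ ({u, w} : Set V))
  exact h (Set.mem_singleton_iff.mp this).symm

lemma chi_pair_ne_pair {u v w : V} (hvu : v ≠ u) (hvw : v ≠ w) :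
    chi ({u, v} : Set V) ≠ chi {u, w} := by
  apply chi_ne_chi
  intro hc
  have : v ∈ ({u, w} : Set V) := hc ▸ (by simp : v ∈ ({u, v} : Set V))
  rcases Set.mem_insert_iff.mp this with h | h
  · exact hvu h
  · exact hvw (Set.mem_singleton_iff.mp h)

lemma chi_pair_ne_pair' {u w u' w' : V} (h1 : u ≠ u') (h2 : u ≠ w') :
    chi ({u, w} : Set V) ≠ chi {u', w'} := by
  apply chi_ne_chi
  intro hc
  have : u ∈ ({u', w'} : Set V) := hc ▸ (by simp : u ∈ ({u, w} : Set V))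
  rcases Set.mem_insert_iff.mp this with h | h
  · exact h1 h
  · exact h2 (Set.mem_singleton_iff.mp h)

section Aux

variable [Fintype V]

/-! ### the linear functional -/

def lf (a : V → ℝ) : (V → ℝ) →ₗ[ℝ] ℝ where
  toFun x := ∑ i, a i * x i
  map_add' x y := by
    simp only [Pi.add_apply, mul_add]
    rw [Finset.sum_add_distrib]
  map_smul' t x := by
    simp only [Pi.smul_apply, smul_eq_mul, RingHom.id_apply, Finset.mul_sum]
    congr 1; ext i; ring

lemma lf_chi_empty (a : V → ℝ) : lf a (chi (∅ : Set V)) = 0 := by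
  simp [lf, chi]

lemma lf_chi_single (a : V → ℝ) (v : V) : lf a (chi {v}) = a v := by
  show (∑ i, a i * chi {v} i) = a v
  have h : ∀ i, a i * chi {v} i = if i = v then a i else 0 := by
    intro i
    by_cases h : i = v <;> simp [chi, Set.indicator, h]
  rw [Finset.sum_congr rfl fun i _ => h i, Finset.sum_ite_eq' Finset.univ v a]
  simp

lemma lf_chi_pair (a : V → ℝ) {u w : V} (h : u ≠ w) : lf a (chi {u, w}) = a u + a w := by
  show (∑ i, a i * chi {u, w} i) = a u + a w
  have hc : ∀ i, a i * chi {u, w} i =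
      (if i = u then a i else 0) + (if i = w then a i else 0) := by
    intro i
    by_cases h1 : i = u
    · subst h1; simp [chi, Set.indicator, h]
    · by_cases h2 : i = w
      · subst h2; simp [chi, Set.indicator, h1]
      · have : i ∉ ({u, w} : Set V) := by simp [h1, h2]
        simp [chi_not_mem this, h1, h2]
  rw [Finset.sum_congr rfl fun i _ => hc i, Finset.sum_add_distrib,
    Finset.sum_ite_eq' Finset.univ u a, Finset.sum_ite_eq' Finset.univ w a]
  simp

/-! ### faces from linear functionals -/

variable {G : SimpleGraph V}

lemma poly_le {a : V → ℝ} {c : ℝ} (hle : ∀ v ∈ polyVerts G, lf a v ≤ c) :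
    ∀ x ∈ poly G, lf a x ≤ c := by
  intro x hx
  have hsub : poly G ⊆ {y | lf a y ≤ c} :=
    convexHull_min hle
      (convex_halfSpace_le ⟨fun a b => map_add _ a b, fun t y => map_smul _ t y⟩ c)
  exact hsub hx

lemma face_isExtreme {a : V → ℝ} {c : ℝ} (hle : ∀ v ∈ polyVerts G, lf a v ≤ c) :
    IsExtreme ℝ (poly G) {x | x ∈ poly G ∧ lf a x = c} := by
  constructor
  · exact fun x hx => hx.1
  · rintro x hx y hy z ⟨hzP, hzc⟩ ⟨s, t, hs, ht, hst, rfl⟩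
    have hx' := poly_le hle x hx
    have hy' := poly_le hle y hy
    have hz : lf a (s • x + t • y) = s * lf a x + t * lf a y := by
      simp [map_add, map_smul, smul_eq_mul]
    rw [hz] at hzc
    have hcc : s * c + t * c = c := by rw [← add_mul, hst, one_mul]
    have hxc : lf a x = c := by
      by_contra hne
      have hlt : lf a x < c := lt_of_le_of_ne hx' hne
      have := add_lt_add_of_lt_of_le (mul_lt_mul_of_pos_left hlt hs)
        (mul_le_mul_of_nonneg_left hy' (le_of_lt ht))
      linarith
    have hyc : lf a y = c := by
      by_contra hne
      have hlt : lf a y < c := lt_of_le_of_ne hy' hne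
      have := add_lt_add_of_le_of_lt (mul_le_mul_of_nonneg_left hx' (le_of_lt hs))
        (mul_lt_mul_of_pos_left hlt ht)
      linarith
    exact ⟨hx, hxc⟩

lemma face_eq {a : V → ℝ} {c : ℝ} {S : Set (V → ℝ)}
    (hle : ∀ v ∈ polyVerts G, lf a v ≤ c)
    (hSsub : S ⊆ polyVerts G) (hSc : ∀ v ∈ S, lf a v = c)
    (hmax : ∀ v ∈ polyVerts G, lf a v = c → v ∈ S) :
    {x | x ∈ poly G ∧ lf a x = c} = convexHull ℝ S := by
  apply Subset.antisymm
  · rintro x ⟨hxP, hxc⟩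
    rw [poly, convexHull_eq] at hxP
    obtain ⟨ι, t, w, z, hw0, hw1, hz, rfl⟩ := hxP
    have hcm : lf a (t.centerMass w z) = ∑ i ∈ t, w i * lf a (z i) := by
      rw [Finset.centerMass_eq_of_sum_1 _ _ hw1, map_sum]
      simp [map_smul, smul_eq_mul]
    have hsum' : ∑ i ∈ t, w i * lf a (z i) = c := by rw [← hcm]; exact hxc
    have h0 : ∑ i ∈ t, w i * (c - lf a (z i)) = 0 := by
      simp only [mul_sub]
      rw [Finset.sum_sub_distrib, ← Finset.sum_mul, hw1, hsum', one_mul, sub_self]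
    have key : ∀ i ∈ t, w i ≠ 0 → z i ∈ S := by
      intro i hi hwi
      have := (Finset.sum_eq_zero_iff_of_nonneg (fun j hj =>
        mul_nonneg (hw0 j hj) (sub_nonneg.mpr (hle _ (hz j hj))))).mp h0 i hi
      have hzi : lf a (z i) = c := by
        rcases mul_eq_zero.mp this with h | h
        · exact absurd h hwi
        · linarith [sub_eq_zero.mp h]
      exact hmax _ (hz i hi) hzi
    rw [← Finset.centerMass_filter_ne_zero (w := w) z]
    have hsum : ∑ i ∈ t.filter (fun i => w i ≠ 0), w i = 1 := by
      rw [Finset.sum_filter_ne_zero, hw1]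
    apply Finset.centerMass_mem_convexHull
    · exact fun i hi => hw0 i (Finset.mem_filter.mp hi).1
    · rw [hsum]; norm_num
    · intro i hi
      obtain ⟨hit, hwi⟩ := Finset.mem_filter.mp hi
      exact key i hit hwi
  · apply convexHull_min
    · intro v hv
      exact ⟨subset_convexHull ℝ _ (hSsub hv), hSc v hv⟩
    · exact (convex_convexHull ℝ _).inter
        (convex_hyperplane ⟨fun a b => map_add _ a b, fun t y => map_smul _ t y⟩ c)

lemma adjVert_of_lf (a : V → ℝ) (c : ℝ) {p q : V → ℝ} (hpq : p ≠ q)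
    (hp : p ∈ polyVerts G) (hq : q ∈ polyVerts G)
    (hpc : lf a p = c) (hqc : lf a q = c)
    (hle : ∀ v ∈ polyVerts G, lf a v ≤ c)
    (hmax : ∀ v ∈ polyVerts G, lf a v = c → v = p ∨ v = q) :
    AdjVert (poly G) p q := by
  refine ⟨hpq, ?_⟩
  have h := face_eq (S := {p, q}) hle
    (by rintro v (rfl | rfl) <;> assumption)
    (by rintro v (rfl | rfl) <;> assumption)
    (by intro v hv hvc
        rcases hmax v hv hvc with rfl | rfl
        · exact Set.mem_insert _ _
        · exact Set.mem_insert_of_mem _ rfl)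
  rw [convexHull_pair] at h
  rw [← h]
  exact face_isExtreme hle

lemma extremePoint_of_lf (a : V → ℝ) (c : ℝ) {p : V → ℝ}
    (hp : p ∈ polyVerts G) (hpc : lf a p = c)
    (hle : ∀ v ∈ polyVerts G, lf a v ≤ c)
    (hmax : ∀ v ∈ polyVerts G, lf a v = c → v = p) :
    p ∈ (poly G).extremePoints ℝ := by
  rw [← isExtreme_singleton]
  have h := face_eq (S := {p}) hle
    (by rintro v rfl; exact hp)
    (by rintro v rfl; exact hpc)
    (by intro v hv hvc; rw [hmax v hv hvc]; rfl)
  rw [convexHull_singleton] at h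
  rw [← h]
  exact face_isExtreme hle
/-! ### membership helpers -/

lemma mem_pv_empty : chi (∅ : Set V) ∈ polyVerts G := Or.inl rfl
lemma mem_pv_single (v : V) : chi ({v} : Set V) ∈ polyVerts G := Or.inr (Or.inl ⟨v, rfl⟩)
lemma mem_pv_pair {u w : V} (h : G.Adj u w) : chi ({u, w} : Set V) ∈ polyVerts G :=
  Or.inr (Or.inr ⟨u, w, h, rfl⟩)

/-! ### extreme points -/

lemma ext_empty : chi (∅ : Set V) ∈ (poly G).extremePoints ℝ := by
  apply extremePoint_of_lf (fun _ => (-1 : ℝ)) 0 mem_pv_empty (lf_chi_empty _)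
  · rintro v (rfl | ⟨y, rfl⟩ | ⟨y, z, hyz, rfl⟩)
    · rw [lf_chi_empty]
    · rw [lf_chi_single]; norm_num
    · rw [lf_chi_pair _ hyz.ne]; norm_num
  · rintro v (rfl | ⟨y, rfl⟩ | ⟨y, z, hyz, rfl⟩) h
    · rfl
    · rw [lf_chi_single] at h; norm_num at h
    · rw [lf_chi_pair _ hyz.ne] at h; norm_num at h

lemma ext_single (u : V) : chi ({u} : Set V) ∈ (poly G).extremePoints ℝ := by
  apply extremePoint_of_lf (fun i => if i = u then (1 : ℝ) else -1) 1 (mem_pv_single u)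
  · rw [lf_chi_single]; simp
  · rintro v (rfl | ⟨y, rfl⟩ | ⟨y, z, hyz, rfl⟩)
    · rw [lf_chi_empty]; norm_num
    · rw [lf_chi_single]; split_ifs <;> norm_num
    · have hne := hyz.ne
      rw [lf_chi_pair _ hyz.ne]
      split_ifs with a1 a2 a3 <;>
        first | (norm_num; done) | (subst_vars; exact (hne rfl).elim)
  · rintro v (rfl | ⟨y, rfl⟩ | ⟨y, z, hyz, rfl⟩) h
    · rw [lf_chi_empty] at h; norm_num at h
    · rw [lf_chi_single] at h
      split_ifs at h with h1
      · rw [h1]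
      · norm_num at h
    · have hne := hyz.ne
      rw [lf_chi_pair _ hyz.ne] at h
      split_ifs at h with a1 a2 a3 <;>
        first | (norm_num at h; done) | (subst_vars; exact (hne rfl).elim)

lemma ext_pair {u v : V} (huv : G.Adj u v) :
    chi ({u, v} : Set V) ∈ (poly G).extremePoints ℝ := by
  apply extremePoint_of_lf (fun i => if i = u then (1 : ℝ) else if i = v then 1 else -4) 2
    (mem_pv_pair huv)
  · rw [lf_chi_pair _ huv.ne]; norm_num [huv.ne']
  · rintro x (rfl | ⟨y, rfl⟩ | ⟨y, z, hyz, rfl⟩)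
    · rw [lf_chi_empty]; norm_num
    · rw [lf_chi_single]; split_ifs <;> norm_num
    · rw [lf_chi_pair _ hyz.ne]; split_ifs <;> norm_num
  · rintro x (rfl | ⟨y, rfl⟩ | ⟨y, z, hyz, rfl⟩) h
    · rw [lf_chi_empty] at h; norm_num at h
    · rw [lf_chi_single] at h; split_ifs at h <;> norm_num at h
    · have hne := hyz.ne
      rw [lf_chi_pair _ hyz.ne] at h
      split_ifs at h with a1 a2 a3 a4 a5 a6 <;>
        first
          | (norm_num at h; done)
          | (subst_vars; exact (hne rfl).elim)
          | (subst_vars; exact rfl)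
          | (subst_vars; exact chi_comm _ _)

/-! ### adjacency lemmas -/

lemma adj_empty_single (v : V) : AdjVert (poly G) (chi ∅) (chi {v}) := by
  apply adjVert_of_lf (fun i => if i = v then (0 : ℝ) else -1) 0 (chi_empty_ne_single v)
    mem_pv_empty (mem_pv_single v) (lf_chi_empty _)
  · rw [lf_chi_single]; simp
  · rintro x (rfl | ⟨y, rfl⟩ | ⟨y, z, hyz, rfl⟩)
    · rw [lf_chi_empty]
    · rw [lf_chi_single]; split_ifs <;> norm_num
    · rw [lf_chi_pair _ hyz.ne]; split_ifs <;> norm_num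
  · rintro x (rfl | ⟨y, rfl⟩ | ⟨y, z, hyz, rfl⟩) h
    · exact Or.inl rfl
    · rw [lf_chi_single] at h
      split_ifs at h with h1
      · right; rw [h1]
      · norm_num at h
    · have hne := hyz.ne
      rw [lf_chi_pair _ hyz.ne] at h
      split_ifs at h with a1 a2 a3 <;>
        first | (norm_num at h; done) | (subst_vars; exact (hne rfl).elim)

lemma adj_single_pair {u w : V} (huw : G.Adj u w) :
    AdjVert (poly G) (chi {u}) (chi {u, w}) := by
  apply adjVert_of_lf (fun i => if i = u then (1 : ℝ) else if i = w then 0 else -4) 1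
    (chi_single_ne_pair huw.ne) (mem_pv_single u) (mem_pv_pair huw)
  · rw [lf_chi_single]; simp
  · rw [lf_chi_pair _ huw.ne]; norm_num [huw.ne']
  · rintro x (rfl | ⟨y, rfl⟩ | ⟨y, z, hyz, rfl⟩)
    · rw [lf_chi_empty]; norm_num
    · rw [lf_chi_single]; split_ifs <;> norm_num
    · have hne := hyz.ne
      rw [lf_chi_pair _ hyz.ne]
      split_ifs with a1 a2 a3 a4 a5 a6 <;>
        first | (norm_num; done) | (subst_vars; exact (hne rfl).elim)
  · rintro x (rfl | ⟨y, rfl⟩ | ⟨y, z, hyz, rfl⟩) h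
    · rw [lf_chi_empty] at h; norm_num at h
    · rw [lf_chi_single] at h
      split_ifs at h with h1
      · left; rw [h1]
      · norm_num at h
      · norm_num at h
    · have hne := hyz.ne
      rw [lf_chi_pair _ hyz.ne] at h
      split_ifs at h with a1 a2 a3 a4 a5 a6 <;>
        first
          | (norm_num at h; done)
          | (subst_vars; exact (hne rfl).elim)
          | (subst_vars; exact Or.inr rfl)
          | (subst_vars; exact Or.inr (chi_comm _ _))

lemma adj_pair_pair {u v w : V} (huv : G.Adj u v) (huw : G.Adj u w) (hvw : v ≠ w) :
    AdjVert (poly G) (chi {u, v}) (chi {u, w}) := by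
  apply adjVert_of_lf
    (fun i => if i = u then (2 : ℝ) else if i = v then 1 else if i = w then 1 else -8) 3
    (chi_pair_ne_pair huv.ne' hvw) (mem_pv_pair huv) (mem_pv_pair huw)
  · rw [lf_chi_pair _ huv.ne]; norm_num [huv.ne']
  · rw [lf_chi_pair _ huw.ne]; norm_num [huw.ne', hvw.symm]
  · rintro x (rfl | ⟨y, rfl⟩ | ⟨y, z, hyz, rfl⟩)
    · rw [lf_chi_empty]; norm_num
    · rw [lf_chi_single]; split_ifs <;> norm_num
    · have hne := hyz.ne
      rw [lf_chi_pair _ hyz.ne]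
      split_ifs with a1 a2 a3 a4 a5 a6 a7 a8 a9 a10 a11 a12 <;>
        first | (norm_num; done) | (subst_vars; exact (hne rfl).elim)
  · rintro x (rfl | ⟨y, rfl⟩ | ⟨y, z, hyz, rfl⟩) h
    · rw [lf_chi_empty] at h; norm_num at h
    · rw [lf_chi_single] at h; split_ifs at h <;> norm_num at h
    · have hne := hyz.ne
      rw [lf_chi_pair _ hyz.ne] at h
      split_ifs at h with a1 a2 a3 a4 a5 a6 a7 a8 a9 a10 a11 a12 <;>
        first
          | (norm_num at h; done)
          | (subst_vars; exact (hne rfl).elim)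
          | (subst_vars; exact Or.inl rfl)
          | (subst_vars; exact Or.inl (chi_comm _ _))
          | (subst_vars; exact Or.inr rfl)
          | (subst_vars; exact Or.inr (chi_comm _ _))

lemma adj_single_single {u v : V} (huv : u ≠ v) (hna : ¬ G.Adj u v) :
    AdjVert (poly G) (chi {u}) (chi {v}) := by
  have hna' : ¬ G.Adj v u := fun h => hna h.symm
  apply adjVert_of_lf (fun i => if i = u then (1 : ℝ) else if i = v then 1 else -4) 1
    (chi_single_ne_single huv) (mem_pv_single u) (mem_pv_single v)
  · rw [lf_chi_single]; simp
  · rw [lf_chi_single]; norm_num [huv.symm]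
  · rintro x (rfl | ⟨y, rfl⟩ | ⟨y, z, hyz, rfl⟩)
    · rw [lf_chi_empty]; norm_num
    · rw [lf_chi_single]; split_ifs <;> norm_num
    · have hne := hyz.ne
      rw [lf_chi_pair _ hyz.ne]
      split_ifs with a1 a2 a3 a4 a5 a6 <;>
        first
          | (norm_num; done)
          | (subst_vars; exact (hne rfl).elim)
          | (subst_vars; exact absurd hyz hna)
          | (subst_vars; exact absurd hyz hna')
  · rintro x (rfl | ⟨y, rfl⟩ | ⟨y, z, hyz, rfl⟩) h
    · rw [lf_chi_empty] at h; norm_num at h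
    · rw [lf_chi_single] at h
      split_ifs at h with h1 h2
      · left; rw [h1]
      · right; rw [h2]
      · norm_num at h
    · have hne := hyz.ne
      rw [lf_chi_pair _ hyz.ne] at h
      split_ifs at h with a1 a2 a3 a4 a5 a6 <;>
        first
          | (norm_num at h; done)
          | (subst_vars; exact (hne rfl).elim)
          | (subst_vars; exact absurd hyz hna)
          | (subst_vars; exact absurd hyz hna')

lemma adj_pair_pair_disjoint {u w u' w' : V} (huw : G.Adj u w) (huw' : G.Adj u' w')
    (h1 : u ≠ u') (h2 : u ≠ w')
    (c1 : ¬ G.Adj u u') (c2 : ¬ G.Adj u w') (c3 : ¬ G.Adj w u') (c4 : ¬ G.Adj w w') :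
    AdjVert (poly G) (chi {u, w}) (chi {u', w'}) := by
  have c1' : ¬ G.Adj u' u := fun h => c1 h.symm
  have c2' : ¬ G.Adj w' u := fun h => c2 h.symm
  have c3' : ¬ G.Adj u' w := fun h => c3 h.symm
  have c4' : ¬ G.Adj w' w := fun h => c4 h.symm
  apply adjVert_of_lf
    (fun i => if i = u ∨ i = w ∨ i = u' ∨ i = w' then (1 : ℝ) else -8) 2
    (chi_pair_ne_pair' h1 h2) (mem_pv_pair huw) (mem_pv_pair huw')
  · rw [lf_chi_pair _ huw.ne]; norm_num
  · rw [lf_chi_pair _ huw'.ne]; norm_num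
  · rintro x (rfl | ⟨y, rfl⟩ | ⟨y, z, hyz, rfl⟩)
    · rw [lf_chi_empty]; norm_num
    · rw [lf_chi_single]; split_ifs <;> norm_num
    · rw [lf_chi_pair _ hyz.ne]; split_ifs <;> norm_num
  · rintro x (rfl | ⟨y, rfl⟩ | ⟨y, z, hyz, rfl⟩) h
    · rw [lf_chi_empty] at h; norm_num at h
    · rw [lf_chi_single] at h; split_ifs at h <;> norm_num at h
    · have hne := hyz.ne
      rw [lf_chi_pair _ hyz.ne] at h
      by_cases hy : y = u ∨ y = w ∨ y = u' ∨ y = w'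
      · by_cases hz : z = u ∨ z = w ∨ z = u' ∨ z = w'
        · rcases hy with rfl | rfl | rfl | rfl <;> rcases hz with rfl | rfl | rfl | rfl <;>
            first
              | exact (hne rfl).elim
              | exact Or.inl rfl
              | exact Or.inl (chi_comm _ _)
              | exact Or.inr rfl
              | exact Or.inr (chi_comm _ _)
              | exact absurd hyz (by assumption)
        · rw [if_pos hy, if_neg hz] at h; norm_num at h
      · rw [if_neg hy] at h
        split_ifs at h <;> norm_num at h

lemma AdjVert.symm' {P : Set (V → ℝ)} {p q : V → ℝ} (h : AdjVert P p q) : AdjVert P q p :=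
  ⟨h.1.symm, by rw [segment_symm]; exact h.2⟩

lemma main_single_pair {v u w : V} (huw : G.Adj u w) :
    AdjVert (poly G) (chi {v}) (chi {u, w}) ∨
      ∃ r ∈ (poly G).extremePoints ℝ,
        AdjVert (poly G) (chi {v}) r ∧ AdjVert (poly G) r (chi {u, w}) := by
  by_cases hvu : v = u
  · subst hvu; exact Or.inl (adj_single_pair huw)
  · by_cases hvw : v = w
    · subst hvw
      have h2 := adj_single_pair (G := G) huw.symm
      rw [chi_comm v u] at h2
      exact Or.inl h2
    · by_cases hadj : G.Adj u v
      · refine Or.inr ⟨chi {u, v}, ext_pair hadj, ?_, adj_pair_pair hadj huw hvw⟩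
        have h2 := adj_single_pair (G := G) hadj.symm
        rw [chi_comm v u] at h2
        exact h2
      · refine Or.inr ⟨chi {u}, ext_single u, ?_, adj_single_pair huw⟩
        exact (adj_single_single (Ne.symm hvu) hadj).symm'

lemma main_pair_pair {u w u' w' : V} (huw : G.Adj u w) (huw' : G.Adj u' w')
    (hne : chi ({u, w} : Set V) ≠ chi {u', w'}) :
    AdjVert (poly G) (chi {u, w}) (chi {u', w'}) ∨
      ∃ r ∈ (poly G).extremePoints ℝ,
        AdjVert (poly G) (chi {u, w}) r ∧ AdjVert (poly G) r (chi {u', w'}) := by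
  by_cases h1 : u = u'
  · subst h1
    by_cases h4 : w = w'
    · subst h4; exact absurd rfl hne
    · exact Or.inl (adj_pair_pair huw huw' h4)
  · by_cases h2 : u = w'
    · subst h2
      by_cases h3 : w = u'
      · subst h3; exact absurd (chi_comm u w) hne
      · have h5 := adj_pair_pair huw huw'.symm h3
        rw [← chi_comm u' u] at h5
        exact Or.inl h5
    · by_cases h3 : w = u'
      · subst h3
        have h5 := adj_pair_pair huw.symm huw' h2
        rw [← chi_comm u w] at h5
        exact Or.inl h5
      · by_cases h4 : w = w'
        · subst h4
          have h5 := adj_pair_pair huw.symm huw'.symm h1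
          rw [← chi_comm u w, ← chi_comm u' w] at h5
          exact Or.inl h5
        · by_cases c1 : G.Adj u u'
          · refine Or.inr ⟨chi {u, u'}, ext_pair c1, adj_pair_pair huw c1 h3, ?_⟩
            have h5 := adj_pair_pair c1.symm huw' h2
            rw [← chi_comm u u'] at h5
            exact h5
          · by_cases c2 : G.Adj u w'
            · refine Or.inr ⟨chi {u, w'}, ext_pair c2, adj_pair_pair huw c2 h4, ?_⟩
              have h5 := adj_pair_pair c2.symm huw'.symm h1
              rw [← chi_comm u w', ← chi_comm u' w'] at h5
              exact h5
            · by_cases c3 : G.Adj w u'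
              · refine Or.inr ⟨chi {w, u'}, ext_pair c3, ?_, ?_⟩
                · have h5 := adj_pair_pair huw.symm c3 h1
                  rw [← chi_comm u w] at h5
                  exact h5
                · have h5 := adj_pair_pair c3.symm huw' h4
                  rw [← chi_comm w u'] at h5
                  exact h5
              · by_cases c4 : G.Adj w w'
                · refine Or.inr ⟨chi {w, w'}, ext_pair c4, ?_, ?_⟩
                  · have h5 := adj_pair_pair huw.symm c4 h2
                    rw [← chi_comm u w] at h5
                    exact h5
                  · have h5 := adj_pair_pair c4.symm huw'.symm h3
                    rw [← chi_comm w w', ← chi_comm u' w'] at h5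
                    exact h5
                · exact Or.inl (adj_pair_pair_disjoint huw huw' h1 h2 c1 c2 c3 c4)

end Aux

theorem stmt9 [Fintype V] [Nonempty V] (G : SimpleGraph V) :
    ∀ p ∈ (poly G).extremePoints ℝ, ∀ q ∈ (poly G).extremePoints ℝ, p ≠ q →
      AdjVert (poly G) p q ∨
        ∃ r ∈ (poly G).extremePoints ℝ,
          AdjVert (poly G) p r ∧ AdjVert (poly G) r q := by
  have sym : ∀ p q : V → ℝ,
      (AdjVert (poly G) q p ∨ ∃ r ∈ (poly G).extremePoints ℝ,
        AdjVert (poly G) q r ∧ AdjVert (poly G) r p) →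
      (AdjVert (poly G) p q ∨ ∃ r ∈ (poly G).extremePoints ℝ,
        AdjVert (poly G) p r ∧ AdjVert (poly G) r q) := by
    rintro p q (h | ⟨r, hr, hh1, hh2⟩)
    · exact Or.inl h.symm'
    · exact Or.inr ⟨r, hr, hh2.symm', hh1.symm'⟩
  intro p hp q hq hpq
  have hp' : p ∈ polyVerts G := extremePoints_convexHull_subset hp
  have hq' : q ∈ polyVerts G := extremePoints_convexHull_subset hq
  rcases hp' with rfl | ⟨v, rfl⟩ | ⟨u, w, huw, rfl⟩ <;>
    rcases hq' with rfl | ⟨v', rfl⟩ | ⟨u', w', huw', rfl⟩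
  · exact absurd rfl hpq
  · exact Or.inl (adj_empty_single v')
  · exact Or.inr ⟨chi {u'}, ext_single u', adj_empty_single u', adj_single_pair huw'⟩
  · exact sym _ _ (Or.inl (adj_empty_single v))
  · by_cases hvv : v = v'
    · subst hvv; exact absurd rfl hpq
    · exact Or.inr ⟨chi ∅, ext_empty, (adj_empty_single v).symm', adj_empty_single v'⟩
  · exact main_single_pair huw'
  · exact sym _ _ (Or.inr ⟨chi {u}, ext_single u, adj_empty_single u, adj_single_pair huw⟩)
  · exact sym _ _ (main_single_pair huw)
  · exact main_pair_pair huw huw' hpq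
end
end

section
/- Suppose Γ has a bipartition of V into two stable sets C and D and a node v₀ ∈ C linked to every node of D. Then the affine map T : ℝ^V → ℝ^V given by (Tx)_{v₀} = 1 − Σ_{a ∈ C} x_a and (Tx)_u = x_u for u ≠ v₀ is an affine involution of ℝ^V that permutes the vertices of P(Γ): it exchanges χ(∅) with χ({v₀}), exchanges χ({b}) with χ({v₀, b}) for each b ∈ D, and fixes every other vertex of P(Γ). -/
open Set

noncomputable section

variable {V : Type*}

lemma chi_singleton_apply [DecidableEq V] (v u : V) :
    chi ({v} : Set V) u = if u = v then 1 else 0 := by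
  simp [chi, Set.indicator_apply]

lemma chi_pair_apply [DecidableEq V] (v w u : V) :
    chi ({v, w} : Set V) u = if u = v ∨ u = w then 1 else 0 := by
  simp [chi, Set.indicator_apply]

theorem stmt12 [Fintype V] [DecidableEq V] (G : SimpleGraph V)
    (C D : Finset V) (v₀ : V)
    (hunion : C ∪ D = Finset.univ) (hdisj : Disjoint C D)
    (hC : ∀ a ∈ C, ∀ b ∈ C, ¬ G.Adj a b)
    (hD : ∀ a ∈ D, ∀ b ∈ D, ¬ G.Adj a b)
    (hv₀ : v₀ ∈ C) (hlink : ∀ b ∈ D, G.Adj v₀ b)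
    (T : (V → ℝ) → (V → ℝ))
    (hT : ∀ x : V → ℝ, ∀ u : V,
      T x u = if u = v₀ then 1 - ∑ a ∈ C, x a else x u) :
    T ∘ T = id ∧
    (∃ A : (V → ℝ) →ᵃ[ℝ] (V → ℝ), ⇑A = T) ∧
    T (chi (∅ : Set V)) = chi ({v₀} : Set V) ∧
    T (chi ({v₀} : Set V)) = chi (∅ : Set V) ∧
    (∀ b ∈ D, T (chi ({b} : Set V)) = chi ({v₀, b} : Set V) ∧
      T (chi ({v₀, b} : Set V)) = chi ({b} : Set V)) ∧
    (∀ x ∈ polyVerts G,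
      x ≠ chi (∅ : Set V) → x ≠ chi ({v₀} : Set V) →
      (∀ b ∈ D, x ≠ chi ({b} : Set V) ∧ x ≠ chi ({v₀, b} : Set V)) →
      T x = x) ∧
    T '' polyVerts G = polyVerts G := by
  classical
  -- basic membership facts
  have hmem : ∀ v : V, v ∈ C ∨ v ∈ D := by
    intro v
    have hv : v ∈ C ∪ D := by rw [hunion]; exact Finset.mem_univ v
    exact Finset.mem_union.mp hv
  have hnotC : ∀ b ∈ D, b ∉ C := fun b hb hbC => (Finset.disjoint_left.mp hdisj hbC) hb
  have hnotD : ∀ a ∈ C, a ∉ D := fun a ha haD => (Finset.disjoint_left.mp hdisj ha) haD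
  -- sums of characteristic vectors over C
  have hsum_empty : ∑ a ∈ C, chi (∅ : Set V) a = 0 := by
    simp [chi]
  have hsum_single : ∀ v : V, ∑ a ∈ C, chi ({v} : Set V) a = if v ∈ C then 1 else 0 := by
    intro v
    simp only [chi_singleton_apply]
    exact Finset.sum_ite_eq' C v (fun _ => (1 : ℝ))
  have hsum_pair : ∀ u ∈ C, ∀ w, w ∉ C → ∑ a ∈ C, chi ({u, w} : Set V) a = 1 := by
    intro u hu w hw
    have h1 : ∀ a ∈ C, chi ({u, w} : Set V) a = if a = u then 1 else 0 := by
      intro a ha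
      rw [chi_pair_apply]
      have haw : a ≠ w := fun h => hw (h ▸ ha)
      by_cases h : a = u <;> simp [h, haw]
    rw [Finset.sum_congr rfl h1, Finset.sum_ite_eq' C u (fun _ => (1 : ℝ)), if_pos hu]
  -- key: sum of (T x) over C
  have hkey : ∀ x : V → ℝ, ∑ a ∈ C, T x a = 1 - x v₀ := by
    intro x
    rw [← Finset.sum_erase_add _ _ hv₀]
    have h1 : ∑ a ∈ C.erase v₀, T x a = ∑ a ∈ C.erase v₀, x a :=
      Finset.sum_congr rfl fun a ha => by rw [hT]; simp [Finset.ne_of_mem_erase ha]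
    have h2 : ∑ a ∈ C.erase v₀, x a + x v₀ = ∑ a ∈ C, x a :=
      Finset.sum_erase_add _ _ hv₀
    rw [h1, hT, if_pos rfl]
    linarith
  -- involution
  have hinv : ∀ x : V → ℝ, T (T x) = x := by
    intro x
    funext u
    rw [hT]
    by_cases h : u = v₀
    · rw [if_pos h, hkey, h]; ring
    · rw [if_neg h, hT, if_neg h]
  -- the special images
  have h0 : T (chi (∅ : Set V)) = chi ({v₀} : Set V) := by
    funext u
    rw [hT, chi_singleton_apply, hsum_empty]
    by_cases h : u = v₀ <;> simp [h, chi]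
  have h1 : T (chi ({v₀} : Set V)) = chi (∅ : Set V) := by
    funext u
    rw [hT, hsum_single, if_pos hv₀]
    by_cases h : u = v₀ <;> simp [h, chi, chi_singleton_apply]
  have hswap : ∀ b, b ∉ C →
      T (chi ({b} : Set V)) = chi ({v₀, b} : Set V) ∧
      T (chi ({v₀, b} : Set V)) = chi ({b} : Set V) := by
    intro b hb
    have hbv : b ≠ v₀ := fun h => hb (h ▸ hv₀)
    constructor
    · funext u
      rw [hT, hsum_single, if_neg hb, chi_pair_apply, chi_singleton_apply]
      by_cases h : u = v₀
      · simp [h]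
      · simp [h]
    · funext u
      rw [hT, hsum_pair v₀ hv₀ b hb, chi_pair_apply, chi_singleton_apply]
      by_cases h : u = v₀
      · simp [h, hbv.symm]
      · simp [h]
  -- fixed vertices
  have hfix_single : ∀ v ∈ C, v ≠ v₀ → T (chi ({v} : Set V)) = chi ({v} : Set V) := by
    intro v hv hvv₀
    funext u
    rw [hT, hsum_single, if_pos hv]
    by_cases h : u = v₀
    · subst h
      rw [if_pos rfl, chi_singleton_apply, if_neg (show ¬ u = v from fun e => hvv₀ e.symm)]
      ring
    · rw [if_neg h]
  have hfix_pair : ∀ u ∈ C, u ≠ v₀ → ∀ w, w ∉ C → G.Adj u w →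
      T (chi ({u, w} : Set V)) = chi ({u, w} : Set V) := by
    intro u hu huv₀ w hw _
    funext z
    rw [hT]
    by_cases h : z = v₀
    · rw [if_pos h, hsum_pair u hu w hw, chi_pair_apply]
      have h1 : v₀ ≠ u := fun e => huv₀ e.symm
      have h2 : v₀ ≠ w := fun e => hw (e ▸ hv₀)
      rw [h, if_neg (by tauto)]
      ring
    · rw [if_neg h]
  -- singleton chis are injective
  have hchi_single_inj : ∀ v w : V, chi ({v} : Set V) = chi ({w} : Set V) → v = w := by
    intro v w h
    have := congrFun h v
    rw [chi_singleton_apply, chi_singleton_apply, if_pos rfl] at this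
    by_contra hne
    rw [if_neg hne] at this
    norm_num at this
  -- edges go between C and D (with reordering)
  have hedge : ∀ u w : V, G.Adj u w →
      ∃ a b : V, a ∈ C ∧ b ∈ D ∧ G.Adj a b ∧ ({u, w} : Set V) = {a, b} := by
    intro u w huw
    rcases hmem u with hu | hu
    · rcases hmem w with hw | hw
      · exact absurd huw (hC u hu w hw)
      · exact ⟨u, w, hu, hw, huw, rfl⟩
    · rcases hmem w with hw | hw
      · exact ⟨w, u, hw, hu, huw.symm, Set.pair_comm u w⟩
      · exact absurd huw (hD u hu w hw)
  refine ⟨?_, ?_, h0, h1, ?_, ?_, ?_⟩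
  · funext x; exact hinv x
  · -- affinity
    refine ⟨{ toFun := T
              linear :=
                { toFun := fun x u => if u = v₀ then -∑ a ∈ C, x a else x u
                  map_add' := by
                    intro x y
                    funext u
                    by_cases h : u = v₀ <;>
                      simp [h, Finset.sum_add_distrib]
                    ring
                  map_smul' := by
                    intro c x
                    funext u
                    by_cases h : u = v₀ <;>
                      simp [h, Finset.mul_sum] }
              map_vadd' := by
                intro p v
                funext u
                show T (v + p) u = (if u = v₀ then -∑ a ∈ C, v a else v u) + T p u
                rw [hT, hT]
                by_cases h : u = v₀
                · simp only [if_pos h, Pi.add_apply, Finset.sum_add_distrib]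
                  ring
                · simp [h] }, rfl⟩
  · intro b hb
    exact hswap b (hnotC b hb)
  · -- fixed points
    rintro x (hx | ⟨v, rfl⟩ | ⟨u, w, huw, rfl⟩) hne hne₀ hb
    · exact absurd hx hne
    · rcases hmem v with hv | hv
      · have hvv₀ : v ≠ v₀ := fun h => hne₀ (by rw [h])
        exact hfix_single v hv hvv₀
      · exact absurd rfl (hb v hv).1
    · obtain ⟨a, b, ha, hbD, hab, hpair⟩ := hedge u w huw
      rw [hpair] at hb hne₀ ⊢
      have hbC : b ∉ C := hnotC b hbD
      have hav₀ : a ≠ v₀ := by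
        rintro rfl
        exact (hb b hbD).2 rfl
      exact hfix_pair a ha hav₀ b hbC hab
  · -- image
    have hsub : ∀ x ∈ polyVerts G, T x ∈ polyVerts G := by
      rintro x (hx | ⟨v, rfl⟩ | ⟨u, w, huw, rfl⟩)
      · rw [hx, h0]; exact Or.inr (Or.inl ⟨v₀, rfl⟩)
      · rcases hmem v with hv | hv
        · by_cases hvv₀ : v = v₀
          · rw [hvv₀, h1]; exact Or.inl rfl
          · rw [hfix_single v hv hvv₀]; exact Or.inr (Or.inl ⟨v, rfl⟩)
        · rw [(hswap v (hnotC v hv)).1]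
          exact Or.inr (Or.inr ⟨v₀, v, hlink v hv, rfl⟩)
      · obtain ⟨a, b, ha, hbD, hab, hpair⟩ := hedge u w huw
        rw [hpair]
        by_cases hav₀ : a = v₀
        · rw [hav₀, (hswap b (hnotC b hbD)).2]
          exact Or.inr (Or.inl ⟨b, rfl⟩)
        · rw [hfix_pair a ha hav₀ b (hnotC b hbD) hab]
          exact Or.inr (Or.inr ⟨a, b, hab, rfl⟩)
    apply Set.Subset.antisymm
    · rintro _ ⟨x, hx, rfl⟩; exact hsub x hx
    · intro x hx
      exact ⟨T x, hsub x hx, hinv x⟩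
end
end

section
/- If the graph Γ fails Condition [*] (i.e. either E = ∅, or there is a bipartition of V into stable sets C, D with a node v₀ ∈ C linked to all nodes of D), and P(Γ) has at least two vertices, then P(Γ) admits a combinatorial automorphism that does not fix the vertex χ(∅). -/
open Set

noncomputable section

variable {V : Type*}

/-! ### Auxiliary material -/

open scoped Classical

lemma chi_apply_mem {S : Set V} {v : V} (h : v ∈ S) : chi S v = 1 :=
  Set.indicator_of_mem h _

lemma chi_apply_not_mem {S : Set V} {v : V} (h : v ∉ S) : chi S v = 0 :=
  Set.indicator_of_notMem h _

lemma chi_empty : chi (∅ : Set V) = 0 := by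
  funext v; exact chi_apply_not_mem (by simp)

section Fin

variable [Fintype V]

/-- Sum of the coordinates over `C`. -/
def Lsum (C : Set V) (x : V → ℝ) : ℝ := ∑ c, C.indicator x c

lemma indicator_pt (C : Set V) (x : V → ℝ) (c : V) [Decidable (c ∈ C)] :
    C.indicator x c = if c ∈ C then x c else 0 := by
  by_cases h : c ∈ C
  · simp [Set.indicator_of_mem h, h]
  · simp [Set.indicator_of_notMem h, h]

lemma Lsum_singleton (C : Set V) (v : V) :
    Lsum C (chi {v}) = if v ∈ C then 1 else 0 := by
  classical
  have h : ∀ c, C.indicator (chi {v}) c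
      = if c = v then (if v ∈ C then (1 : ℝ) else 0) else 0 := by
    intro c
    rcases eq_or_ne c v with rfl | hcv
    · rw [indicator_pt, chi_apply_mem (show c ∈ ({c} : Set V) from rfl)]
      simp
    · rw [indicator_pt, chi_apply_not_mem (show c ∉ ({v} : Set V) by simpa using hcv)]
      simp [hcv]
  simp [Lsum, h, Finset.sum_ite_eq']

lemma Lsum_pair {C : Set V} {u w : V} (hu : u ∈ C) (hw : w ∉ C) :
    Lsum C (chi {u, w}) = 1 := by
  classical
  have huw : u ≠ w := fun h => hw (h ▸ hu)
  have h : ∀ c, C.indicator (chi {u, w}) c = if c = u then (1 : ℝ) else 0 := by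
    intro c
    rcases eq_or_ne c u with rfl | hcu
    · simp [indicator_pt, hu, chi_apply_mem (show c ∈ ({c, w} : Set V) by simp)]
    · rcases eq_or_ne c w with rfl | hcw
      · simp [indicator_pt, hw, hcu]
      · have : c ∉ ({u, w} : Set V) := by simp [hcu, hcw]
        by_cases h : c ∈ C <;> simp [indicator_pt, h, hcu, chi_apply_not_mem this]
  simp [Lsum, h, Finset.sum_ite_eq']

/-- The linear part of the switching map. -/
def Mlin (C : Set V) (v₀ : V) : (V → ℝ) →ₗ[ℝ] (V → ℝ) where
  toFun x := fun v => if v = v₀ then -(Lsum C x) else x v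
  map_add' x y := by
    classical
    funext v
    have : Lsum C (x + y) = Lsum C x + Lsum C y := by
      simp only [Lsum, ← Finset.sum_add_distrib]
      refine Finset.sum_congr rfl fun c _ => ?_
      by_cases h : c ∈ C <;> simp [indicator_pt, h]
    rcases eq_or_ne v v₀ with rfl | hv
    · simp [this]; ring
    · simp [hv]
  map_smul' a x := by
    classical
    funext v
    have : Lsum C (a • x) = a * Lsum C x := by
      simp only [Lsum, Finset.mul_sum]
      refine Finset.sum_congr rfl fun c _ => ?_
      by_cases h : c ∈ C <;> simp [indicator_pt, h]
    rcases eq_or_ne v v₀ with rfl | hv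
    · simp [this]
    · simp [hv]

lemma Mlin_apply (C : Set V) (v₀ v : V) (x : V → ℝ) :
    Mlin C v₀ x v = if v = v₀ then -(Lsum C x) else x v := rfl

lemma Lsum_Mlin {C : Set V} {v₀ : V} (hv₀ : v₀ ∈ C) (x : V → ℝ) :
    Lsum C (Mlin C v₀ x) = -(x v₀) := by
  classical
  have h : ∀ c, C.indicator (Mlin C v₀ x) c
      = C.indicator x c + (if c = v₀ then (-(Lsum C x) - x v₀) else 0) := by
    intro c
    rcases eq_or_ne c v₀ with rfl | hc
    · simp [indicator_pt, hv₀, Mlin_apply]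
    · by_cases h : c ∈ C <;> simp [indicator_pt, h, Mlin_apply, hc]
  simp only [Lsum] at *
  rw [Finset.sum_congr rfl fun c _ => h c, Finset.sum_add_distrib,
    Finset.sum_ite_eq' Finset.univ v₀ (fun _ => -(∑ c, C.indicator x c) - x v₀)]
  simp; ring

lemma Mlin_involutive {C : Set V} {v₀ : V} (hv₀ : v₀ ∈ C) :
    Function.Involutive (Mlin C v₀) := by
  intro x
  funext v
  rcases eq_or_ne v v₀ with rfl | hv
  · simp [Mlin_apply, Lsum_Mlin hv₀]
  · simp [Mlin_apply, hv]

/-- The switching affine automorphism. -/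
def swEquiv (C : Set V) (v₀ : V) (hv₀ : v₀ ∈ C) : (V → ℝ) ≃ᵃ[ℝ] (V → ℝ) :=
  (LinearEquiv.ofInvolutive (Mlin C v₀) (Mlin_involutive hv₀)).toAffineEquiv.trans
    (AffineEquiv.constVAdd ℝ (V → ℝ) (chi {v₀}))

lemma swEquiv_apply (C : Set V) (v₀ : V) (hv₀ : v₀ ∈ C) (x : V → ℝ) (v : V) :
    swEquiv C v₀ hv₀ x v = if v = v₀ then 1 - Lsum C x else x v := by
  have : swEquiv C v₀ hv₀ x v = chi {v₀} v + Mlin C v₀ x v := rfl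
  rw [this, Mlin_apply]
  rcases eq_or_ne v v₀ with hv | hv
  · rw [if_pos hv, if_pos hv, hv, chi_apply_mem (show v₀ ∈ ({v₀} : Set V) from rfl)]
    ring
  · rw [if_neg hv, if_neg hv,
      chi_apply_not_mem (show v ∉ ({v₀} : Set V) by simpa using hv), zero_add]

lemma swEquiv_involutive (C : Set V) (v₀ : V) (hv₀ : v₀ ∈ C) (x : V → ℝ) :
    swEquiv C v₀ hv₀ (swEquiv C v₀ hv₀ x) = x := by
  funext v
  have hL : Lsum C (swEquiv C v₀ hv₀ x) = 1 - x v₀ := by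
    have he : swEquiv C v₀ hv₀ x = chi {v₀} + Mlin C v₀ x := rfl
    have h1 : Lsum C (chi {v₀}) = 1 := by simp [Lsum_singleton, hv₀]
    have hadd : Lsum C (chi {v₀} + Mlin C v₀ x)
        = Lsum C (chi {v₀}) + Lsum C (Mlin C v₀ x) := by
      classical
      simp only [Lsum, ← Finset.sum_add_distrib]
      refine Finset.sum_congr rfl fun c _ => ?_
      by_cases h : c ∈ C <;> simp [indicator_pt, h]
    rw [he, hadd, h1, Lsum_Mlin hv₀]; ring
  rw [swEquiv_apply, hL]
  rcases eq_or_ne v v₀ with rfl | hv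
  · simp
  · simp [hv, swEquiv_apply, hv]

end Fin

/-- Affine equivalences preserve extreme subsets. -/
lemma isExtreme_affineImage {E : Type*} [AddCommGroup E] [Module ℝ E]
    (e : E ≃ᵃ[ℝ] E) {P F : Set E} (h : IsExtreme ℝ P F) :
    IsExtreme ℝ (e '' P) (e '' F) := by
  constructor
  · exact Set.image_mono h.1
  · rintro x₁ ⟨y₁, hy₁, rfl⟩ x₂ ⟨y₂, hy₂, rfl⟩ x ⟨y, hy, rfl⟩ hseg
    have himg := image_openSegment ℝ e.toAffineMap y₁ y₂
    rw [show e.toAffineMap y₁ = e y₁ from rfl, show e.toAffineMap y₂ = e y₂ from rfl]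
      at himg
    rw [← himg] at hseg
    obtain ⟨z, hz, hze⟩ := hseg
    have : z = y := e.injective (by simpa using hze)
    subst this
    exact ⟨y₁, h.2 hy₁ hy₂ hy hz, rfl⟩

lemma affEquiv_symm_image {E : Type*} [AddCommGroup E] [Module ℝ E]
    (e : E ≃ᵃ[ℝ] E) (P : Set E) : e.symm '' (e '' P) = P := by
  rw [← Set.image_comp]
  simp [Function.comp_def]

/-- Affine equivalences preserve extreme points. -/
lemma extremePoints_affine_image {E : Type*} [AddCommGroup E] [Module ℝ E]
    (e : E ≃ᵃ[ℝ] E) (P : Set E) :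
    e '' (P.extremePoints ℝ) = (e '' P).extremePoints ℝ := by
  have key : ∀ (f : E ≃ᵃ[ℝ] E) (Q : Set E),
      f '' (Q.extremePoints ℝ) ⊆ (f '' Q).extremePoints ℝ := by
    rintro f Q x ⟨y, hy, rfl⟩
    rw [← isExtreme_singleton] at hy ⊢
    have := isExtreme_affineImage f hy
    rwa [Set.image_singleton] at this
  refine Set.Subset.antisymm (key e P) ?_
  intro x hx
  have h2 := key e.symm (e '' P) ⟨x, hx, rfl⟩
  rw [affEquiv_symm_image] at h2
  exact ⟨e.symm x, h2, by simp⟩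

theorem stmt13_key [Fintype V] (G : SimpleGraph V) (C D : Set V) (v₀ : V)
    (hCD : C ∪ D = Set.univ) (hdisj : Disjoint C D)
    (hC : ∀ a ∈ C, ∀ b ∈ C, ¬ G.Adj a b)
    (hD : ∀ a ∈ D, ∀ b ∈ D, ¬ G.Adj a b)
    (hv₀ : v₀ ∈ C) (hlink : ∀ b ∈ D, G.Adj v₀ b) :
    ∃ σ : (V → ℝ) → (V → ℝ),
      IsCombAut (poly G) σ ∧ σ (chi (∅ : Set V)) ≠ chi (∅ : Set V) := by
  classical
  set e := swEquiv C v₀ hv₀ with he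
  have hmemD : ∀ v, v ∉ C → v ∈ D := by
    intro v hv
    have h : v ∈ C ∨ v ∈ D := (Set.mem_union v C D).1 (by rw [hCD]; trivial)
    tauto
  -- e maps the ground vertex set into itself
  have hmaps : ∀ x ∈ polyVerts G, e x ∈ polyVerts G := by
    have hpairCD : ∀ {u w : V}, G.Adj u w → u ∈ C → w ∈ D := by
      intro u w hadj hu
      by_cases hwC : w ∈ C
      · exact absurd hadj (hC u hu w hwC)
      · exact hmemD w hwC
    -- the image of a pair-vertex with first coordinate in C
    have hedge : ∀ u w : V, G.Adj u w → u ∈ C → e (chi {u, w}) ∈ polyVerts G := by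
      intro u w hadj hu
      have hwD : w ∈ D := hpairCD hadj hu
      have hwC : w ∉ C := fun h => hdisj.ne_of_mem h hwD rfl
      have hLs : Lsum C (chi {u, w}) = 1 := Lsum_pair hu hwC
      rcases eq_or_ne u v₀ with huv | huv
      · -- e (chi {v₀, w}) = chi {w}
        refine Or.inr (Or.inl ⟨w, ?_⟩)
        funext v
        rw [swEquiv_apply, hLs]
        rcases eq_or_ne v v₀ with hv | hv
        · have hvw : v ∉ ({w} : Set V) := by
            simp only [Set.mem_singleton_iff]
            rintro rfl
            exact (G.ne_of_adj hadj) (huv.trans hv.symm)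
          rw [if_pos hv, chi_apply_not_mem hvw]; norm_num
        · rw [if_neg hv]
          rcases eq_or_ne v w with rfl | hvw
          · rw [chi_apply_mem (show v ∈ ({u, v} : Set V) by simp),
              chi_apply_mem (show v ∈ ({v} : Set V) from rfl)]
          · rw [chi_apply_not_mem (show v ∉ ({u, w} : Set V) by
                simp only [Set.mem_insert_iff, Set.mem_singleton_iff]
                rintro (rfl | rfl)
                exacts [hv huv, hvw rfl]),
              chi_apply_not_mem (by simpa using hvw)]
      · -- e (chi {u, w}) = chi {u, w}
        refine Or.inr (Or.inr ⟨u, w, hadj, ?_⟩)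
        funext v
        rw [swEquiv_apply, hLs]
        rcases eq_or_ne v v₀ with rfl | hv
        · have : v ∉ ({u, w} : Set V) := by
            simp
            exact ⟨fun h => huv h.symm, fun h => hdisj.ne_of_mem hv₀ hwD h⟩
          rw [chi_apply_not_mem this]; norm_num
        · simp [hv]
    rintro x (rfl | ⟨v, rfl⟩ | ⟨u, w, hadj, rfl⟩)
    · -- chi ∅ ↦ chi {v₀}
      refine Or.inr (Or.inl ⟨v₀, ?_⟩)
      funext v
      rw [chi_empty, swEquiv_apply]
      have h0 : Lsum C (0 : V → ℝ) = 0 := by simp [Lsum]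
      rcases eq_or_ne v v₀ with rfl | hv
      · rw [h0, chi_apply_mem (show v ∈ ({v} : Set V) from rfl)]; norm_num
      · simp [hv, chi_apply_not_mem (show v ∉ ({v₀} : Set V) by simpa using hv)]
    · rcases eq_or_ne v v₀ with rfl | hvv₀
      · -- chi {v₀} ↦ chi ∅
        refine Or.inl ?_
        funext w
        rw [swEquiv_apply, Lsum_singleton, if_pos hv₀, chi_empty]
        rcases eq_or_ne w v with rfl | hw
        · norm_num
        · simp [hw, chi_apply_not_mem (show w ∉ ({v} : Set V) by simpa using hw)]
      · by_cases hvC : v ∈ C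
        · -- chi {v} ↦ chi {v}
          refine Or.inr (Or.inl ⟨v, ?_⟩)
          funext w
          rw [swEquiv_apply, Lsum_singleton, if_pos hvC]
          rcases eq_or_ne w v₀ with rfl | hw
          · rw [chi_apply_not_mem (show w ∉ ({v} : Set V) by
              simpa using fun h => hvv₀ h.symm)]
            norm_num
          · simp [hw]
        · -- chi {v} ↦ chi {v₀, v}
          have hvD : v ∈ D := hmemD v hvC
          refine Or.inr (Or.inr ⟨v₀, v, hlink v hvD, ?_⟩)
          funext w
          rw [swEquiv_apply, Lsum_singleton, if_neg hvC]
          rcases eq_or_ne w v₀ with rfl | hw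
          · rw [chi_apply_mem (show w ∈ ({w, v} : Set V) by simp)]; norm_num
          · simp only [hw, if_false]
            rcases eq_or_ne w v with rfl | hwv
            · rw [chi_apply_mem (show w ∈ ({v₀, w} : Set V) by simp),
                chi_apply_mem (show w ∈ ({w} : Set V) from rfl)]
            · rw [chi_apply_not_mem (show w ∉ ({v₀, v} : Set V) by simp [hw, hwv]),
                chi_apply_not_mem (by simpa using hwv)]
    · by_cases huC : u ∈ C
      · exact hedge u w hadj huC
      · have hpair : ({u, w} : Set V) = {w, u} := Set.pair_comm u w
        rw [hpair]
        refine hedge w u hadj.symm ?_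
        have huD : u ∈ D := hmemD u huC
        by_cases hwC : w ∈ C
        · exact hwC
        · exact absurd hadj (hD u huD w (hmemD w hwC))
  have hinv : ∀ x, e (e x) = x := swEquiv_involutive C v₀ hv₀
  -- the image of polyVerts is itself
  have himg : e '' polyVerts G = polyVerts G := by
    apply Set.Subset.antisymm
    · rintro x ⟨y, hy, rfl⟩; exact hmaps y hy
    · intro x hx
      exact ⟨e x, hmaps x hx, hinv x⟩
  -- the image of the polytope is itself
  have hpoly : e '' poly G = poly G := by
    have := e.toAffineMap.image_convexHull (polyVerts G)
    rw [show ⇑e.toAffineMap = ⇑e from rfl] at this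
    rw [poly, this, himg]
  -- extreme points are preserved
  have hext : e '' ((poly G).extremePoints ℝ) = (poly G).extremePoints ℝ := by
    rw [extremePoints_affine_image e (poly G), hpoly]
  refine ⟨e, ⟨?_, ?_⟩, ?_⟩
  · exact ⟨fun x hx => hext ▸ Set.mem_image_of_mem e hx,
      e.injective.injOn, hext.superset⟩
  · intro F hF
    refine ⟨e '' F, ?_, ?_⟩
    · have := isExtreme_affineImage e hF
      rwa [hpoly] at this
    · rw [Set.image_inter e.injective, hext]
  · intro hcon
    have : e (chi (∅ : Set V)) v₀ = chi (∅ : Set V) v₀ := by rw [hcon]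
    rw [chi_empty, swEquiv_apply] at this
    simp [Lsum] at this

theorem stmt13 [Fintype V] [Nonempty V] (G : SimpleGraph V)
    (hfail : G.edgeSet = ∅ ∨
      ∃ (C D : Set V) (v₀ : V),
        C ∪ D = Set.univ ∧ Disjoint C D ∧
        (∀ a ∈ C, ∀ b ∈ C, ¬ G.Adj a b) ∧
        (∀ a ∈ D, ∀ b ∈ D, ¬ G.Adj a b) ∧
        v₀ ∈ C ∧ (∀ b ∈ D, G.Adj v₀ b))
    (htwo : ((poly G).extremePoints ℝ).Nontrivial) :
    ∃ σ : (V → ℝ) → (V → ℝ),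
      IsCombAut (poly G) σ ∧ σ (chi (∅ : Set V)) ≠ chi (∅ : Set V) := by
  rcases hfail with hE | ⟨C, D, v₀, hCD, hdisj, hC, hD, hv₀, hlink⟩
  · refine stmt13_key G Set.univ ∅ (Classical.arbitrary V) (by simp)
      (by simp) ?_ (by simp) (Set.mem_univ _) (by simp)
    intro a _ b _ hadj
    have : s(a, b) ∈ G.edgeSet := hadj
    rw [hE] at this
    exact this
  · exact stmt13_key G C D v₀ hCD hdisj hC hD hv₀ hlink
end
end
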